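/- Let r divide n with n/r > 2, and let ω ∈ S_n be the permutation with m_ω^r(i) ≡ i (mod n/r) (taking values in [n/r]), i.e., m_ω^r = (1,2,...,n/r, 1,2,...,n/r, ...). Then |S(m_ω^r, 1)| = 1 + (n−1)² − (r−1)n, and for all σ ∈ S_n, |S(m_σ^r,1)| ≤ |S(m_ω^r,1)|. -/

import Mathlib

namespace UlamPaper

/-- Underlying function of the translocation `φ(i,j)` (0-indexed). -/
def tf (i j k : ℕ) : ℕ :=
  if i ≤ j then (if k < i ∨ j < k then k else if k = j then i else k + 1)
  else (if k < j ∨ i < k then k else if k = j then i else k - 1)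

theorem tf_lt {n i j k : ℕ} (hi : i < n) (hj : j < n) (hk : k < n) : tf i j k < n := by
  unfold tf; split_ifs <;> omega

theorem tf_tf (i j k : ℕ) : tf j i (tf i j k) = k := by
  unfold tf; split_ifs <;> omega

/-- The translocation `φ(i,j)` as a permutation of `Fin n`: it deletes the entry in
position `i` and reinserts it at position `j`, shifting intermediate entries. -/
def transloc {n : ℕ} (i j : Fin n) : Equiv.Perm (Fin n) where
  toFun k := ⟨tf i.val j.val k.val, tf_lt i.isLt j.isLt k.isLt⟩
  invFun k := ⟨tf j.val i.val k.val, tf_lt j.isLt i.isLt k.isLt⟩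
  left_inv k := Fin.ext (tf_tf i.val j.val k.val)
  right_inv k := Fin.ext (tf_tf j.val i.val k.val)

/-- `IsTransloc φ` : `φ` is a translocation. -/
def IsTransloc {n : ℕ} (φ : Equiv.Perm (Fin n)) : Prop := ∃ i j : Fin n, φ = transloc i j

/-- Length of the longest common subsequence of two `n`-length sequences. -/
noncomputable def lcsLen {n : ℕ} {α : Type*} (u v : Fin n → α) : ℕ :=
  sSup {k | ∃ f g : Fin k → Fin n, StrictMono f ∧ StrictMono g ∧ ∀ p, u (f p) = v (g p)}

/-- The Ulam distance `d(σ,π) = n - ℓ(σ,π)`. -/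
noncomputable def ulamDist {n : ℕ} (σ π : Equiv.Perm (Fin n)) : ℕ :=
  n - lcsLen (⇑σ) (⇑π)

/-- The `r`-regular multipermutation `m_σ^r` (with values in `[1, n/r]`). -/
def mult {n : ℕ} (r : ℕ) (σ : Equiv.Perm (Fin n)) : Fin n → ℕ :=
  fun i => (σ i).val / r + 1

/-- The `r`-regular Ulam distance, expressed as `n - ℓ(m_σ^r, m_π^r)`. -/
noncomputable def multDist {n : ℕ} (r : ℕ) (σ π : Equiv.Perm (Fin n)) : ℕ :=
  n - lcsLen (mult r σ) (mult r π)

/-- The `r`-regular Ulam sphere of radius `t` centered at `m_σ^r`. -/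
def multSphere {n : ℕ} (r : ℕ) (σ : Equiv.Perm (Fin n)) (t : ℕ) : Set (Fin n → ℕ) :=
  {x | ∃ π : Equiv.Perm (Fin n), x = mult r π ∧ multDist r σ π ≤ t}

----------------------------------------------------------------
-- aux
variable {n : ℕ}

lemma transloc_val (a b k : Fin n) : ((transloc a b) k).val = tf a.val b.val k.val := rfl

lemma congr_m (m : Fin n → ℕ) {x y : Fin n} (h : x.val = y.val) : m x = m y :=
  congrArg m (Fin.ext h)

/-- the word `m ∘ transloc a b`. -/
def W (m : Fin n → ℕ) (a b : Fin n) : Fin n → ℕ := fun k => m (transloc a b k)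

lemma W_apply (m : Fin n → ℕ) (a b k : Fin n) :
    W m a b k = m ⟨tf a.val b.val k.val, tf_lt a.isLt b.isLt k.isLt⟩ := rfl

lemma W_self (m : Fin n → ℕ) (a : Fin n) : W m a a = m := by
  funext k
  rw [W_apply]
  exact congr_m m (show tf a.val a.val k.val = k.val by unfold tf; split_ifs <;> omega)

lemma key (m : Fin n → ℕ) {a b a' b' x y : Fin n} (hm : m x = m y)
    (h : ∀ k : Fin n, tf a.val b.val k.val = tf a'.val b'.val k.val ∨
      (tf a.val b.val k.val = x.val ∧ tf a'.val b'.val k.val = y.val) ∨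
      (tf a.val b.val k.val = y.val ∧ tf a'.val b'.val k.val = x.val)) :
    W m a b = W m a' b' := by
  funext k
  rw [W_apply, W_apply]
  rcases h k with h1 | ⟨h1, h2⟩ | ⟨h1, h2⟩
  · exact congr_m m h1
  · exact (congr_m m h1).trans (hm.trans (congr_m m h2).symm)
  · exact (congr_m m h1).trans (hm.symm.trans (congr_m m h2).symm)

/-- R3 (descending): if `a < b` and `m a = m b` then `φ(a,b) ≡ φ(a,b-1)`. -/
lemma relA1 (m : Fin n → ℕ) {a b b' : Fin n} (hab : a.val < b.val)
    (hb' : b'.val + 1 = b.val) (hm : m a = m b) : W m a b = W m a b' := by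
  refine key m hm (fun k => ?_)
  unfold tf; split_ifs <;> omega

/-- R3 (ascending): if `b < a` and `m a = m b` then `φ(a,b) ≡ φ(a,b+1)`. -/
lemma relA2 (m : Fin n → ℕ) {a b b' : Fin n} (hab : b.val < a.val)
    (hb' : b.val + 1 = b'.val) (hm : m a = m b) : W m a b = W m a b' := by
  have hm' : m b = m a := hm.symm
  refine key m hm' (fun k => ?_)
  unfold tf; split_ifs <;> omega

/-- R2: if `m c = m a` with `c + 1 = a` then `φ(a,b) ≡ φ(c,b)` for any `b`. -/
lemma relA4 (m : Fin n → ℕ) {a c : Fin n} (b : Fin n)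
    (hc : c.val + 1 = a.val) (hm : m c = m a) : W m a b = W m c b := by
  have hm' : m a = m c := hm.symm
  refine key m hm' (fun k => ?_)
  unfold tf; split_ifs <;> omega

/-- R4: adjacent translocations agree. -/
lemma relA3 (m : Fin n → ℕ) {a b : Fin n} (h : b.val + 1 = a.val) :
    W m a b = W m b a := by
  funext k
  rw [W_apply, W_apply]
  exact congr_m m (show tf a.val b.val k.val = tf b.val a.val k.val by
    unfold tf; split_ifs <;> omega)

/-- membership in the canonical set of pairs. -/
def InC (m : Fin n → ℕ) (a b : Fin n) : Prop :=
  m a ≠ m b ∧ b.val ≠ a.val - 1 ∧ ∀ c : Fin n, c.val + 1 = a.val → m c ≠ m a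

lemma reduce_aux (m : Fin n → ℕ) :
    ∀ N, ∀ a b : Fin n, 2 * a.val + (max a.val b.val - min a.val b.val) ≤ N →
      W m a b = m ∨ ∃ a' b' : Fin n, InC m a' b' ∧ W m a b = W m a' b' := by
  intro N
  induction N with
  | zero =>
    intro a b h
    have : a.val = b.val := by omega
    left; rw [show a = b from Fin.ext this]; exact W_self m b
  | succ N ih =>
    intro a b hμ
    by_cases hm : m a = m b
    · rcases Nat.lt_trichotomy a.val b.val with h | h | h
      · -- a < b : go to (a, b-1)
        have hb : b.val - 1 < n := by omega
        set b' : Fin n := ⟨b.val - 1, hb⟩ with hb'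
        have e : W m a b = W m a b' := relA1 m h (by simp [hb']; omega) hm
        rcases ih a b' (by simp [hb']; omega) with h' | h'
        · left; rw [e]; exact h'
        · right; obtain ⟨a'', b'', hC, he⟩ := h'; exact ⟨a'', b'', hC, e.trans he⟩
      · left; rw [show a = b from Fin.ext h]; exact W_self m b
      · -- b < a : go to (a, b+1)
        have hb : b.val + 1 < n := by omega
        set b' : Fin n := ⟨b.val + 1, hb⟩ with hb'
        have e : W m a b = W m a b' := relA2 m h (by simp [hb']) hm
        rcases ih a b' (by simp [hb']; omega) with h' | h'
        · left; rw [e]; exact h'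
        · right; obtain ⟨a'', b'', hC, he⟩ := h'; exact ⟨a'', b'', hC, e.trans he⟩
    · -- m a ≠ m b, in particular a ≠ b
      have hane : a.val ≠ b.val := fun h => hm (congr_m m h)
      by_cases hadj : b.val + 1 = a.val
      · -- use R4 : (a, a-1) ~ (a-1, a)
        have e : W m a b = W m b a := relA3 m hadj
        rcases ih b a (by omega) with h' | h'
        · left; rw [e]; exact h'
        · right; obtain ⟨a'', b'', hC, he⟩ := h'; exact ⟨a'', b'', hC, e.trans he⟩
      · by_cases hlead : ∃ c : Fin n, c.val + 1 = a.val ∧ m c = m a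
        · obtain ⟨c, hc1, hc2⟩ := hlead
          have e : W m a b = W m c b := relA4 m b hc1 hc2
          rcases ih c b (by omega) with h' | h'
          · left; rw [e]; exact h'
          · right; obtain ⟨a'', b'', hC, he⟩ := h'; exact ⟨a'', b'', hC, e.trans he⟩
        · right
          refine ⟨a, b, ⟨hm, ?_, ?_⟩, rfl⟩
          · omega
          · intro c h1 h2; exact hlead ⟨c, h1, h2⟩

lemma reduce (m : Fin n → ℕ) (a b : Fin n) :
    W m a b = m ∨ ∃ a' b' : Fin n, InC m a' b' ∧ W m a b = W m a' b' :=
  reduce_aux m _ a b le_rfl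


----------------------------------------------------------------
-- LCS facts

def lcsSet {n : ℕ} {α : Type*} (u v : Fin n → α) : Set ℕ :=
  {k | ∃ f g : Fin k → Fin n, StrictMono f ∧ StrictMono g ∧ ∀ p, u (f p) = v (g p)}

lemma lcsLen_def {α : Type*} (u v : Fin n → α) : lcsLen u v = sSup (lcsSet u v) := rfl

lemma lcsSet_bddAbove {α : Type*} (u v : Fin n → α) : BddAbove (lcsSet u v) := by
  refine ⟨n, fun k hk => ?_⟩
  obtain ⟨f, _, hf, _, _⟩ := hk
  simpa using Fintype.card_le_of_injective f hf.injective

lemma lcsSet_zero_mem {α : Type*} (u v : Fin n → α) : 0 ∈ lcsSet u v :=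
  ⟨Fin.elim0, Fin.elim0, fun p => p.elim0, fun p => p.elim0, fun p => p.elim0⟩

lemma lcsSet_mem_of_le {α : Type*} {u v : Fin n → α} {k j : ℕ} (hk : k ∈ lcsSet u v)
    (hj : j ≤ k) : j ∈ lcsSet u v := by
  obtain ⟨f, g, hf, hg, h⟩ := hk
  exact ⟨f ∘ Fin.castLE hj, g ∘ Fin.castLE hj, hf.comp (Fin.strictMono_castLE hj),
    hg.comp (Fin.strictMono_castLE hj), fun p => h _⟩

lemma le_lcsLen {α : Type*} {u v : Fin n → α} {k : ℕ} (hk : k ∈ lcsSet u v) :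
    k ≤ lcsLen u v := le_csSup (lcsSet_bddAbove u v) hk

lemma lcsLen_mem {α : Type*} (u v : Fin n → α) : lcsLen u v ∈ lcsSet u v :=
  Nat.sSup_mem ⟨0, lcsSet_zero_mem u v⟩ (lcsSet_bddAbove u v)

lemma succAbove_val (b : Fin (n + 1)) (p : Fin n) :
    (b.succAbove p).val = if p.val < b.val then p.val else p.val + 1 := by
  rw [Fin.succAbove]
  rcases Nat.lt_or_ge p.val b.val with h | h
  · rw [if_pos (by rwa [Fin.lt_def]), if_pos h]; rfl
  · rw [if_neg (by rw [Fin.lt_def]; simp only [Fin.coe_castSucc]; omega), if_neg (by omega)]; rfl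

/-- `transloc a b ∘ succAbove b = succAbove a`. -/
lemma transloc_succAbove (a b : Fin (n + 1)) (p : Fin n) :
    transloc a b (b.succAbove p) = a.succAbove p := by
  apply Fin.ext
  rw [transloc_val, succAbove_val, succAbove_val]
  have := (succAbove_val b p).symm
  generalize (b.succAbove p).val = x at this ⊢
  unfold tf; split_ifs <;> omega

variable {r : ℕ}

lemma multDist_le_one (r : ℕ) (σ π : Equiv.Perm (Fin (n + 1))) (a b : Fin (n + 1))
    (h : mult r π = W (mult r σ) a b) : multDist r σ π ≤ 1 := by
  have hmem : n ∈ lcsSet (mult r σ) (mult r π) := by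
    refine ⟨a.succAbove, b.succAbove, Fin.strictMono_succAbove a,
      Fin.strictMono_succAbove b, fun p => ?_⟩
    rw [h]
    show mult r σ (a.succAbove p) = mult r σ (transloc a b (b.succAbove p))
    rw [transloc_succAbove]
  have := le_lcsLen hmem
  unfold multDist
  omega

lemma range_eq_compl {f : Fin n → Fin (n + 1)} (hf : Function.Injective f)
    {a : Fin (n + 1)} (ha : ∀ p, f p ≠ a) :
    Finset.univ.image f = Finset.univ.erase a := by
  apply Finset.eq_of_subset_of_card_le
  · intro y hy
    simp only [Finset.mem_image] at hy
    obtain ⟨p, _, rfl⟩ := hy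
    exact Finset.mem_erase.mpr ⟨ha p, Finset.mem_univ _⟩
  · rw [Finset.card_erase_of_mem (Finset.mem_univ a),
      Finset.card_image_of_injective _ hf]
    simp

lemma sum_mult (τ : Equiv.Perm (Fin n)) :
    ∑ k, mult r τ k = ∑ k : Fin n, (k.val / r + 1) :=
  Equiv.sum_comp τ (fun i : Fin n => i.val / r + 1)

lemma sum_W (σ : Equiv.Perm (Fin n)) (a b : Fin n) :
    ∑ k, W (mult r σ) a b k = ∑ k : Fin n, (k.val / r + 1) := by
  rw [show ∑ k, W (mult r σ) a b k = ∑ k, mult r σ (transloc a b k) from rfl,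
    Equiv.sum_comp (transloc a b) (mult r σ)]
  exact sum_mult σ

lemma exists_transloc_of_multDist_le_one {σ π : Equiv.Perm (Fin (n + 1))}
    (hd : multDist r σ π ≤ 1) : ∃ a b : Fin (n + 1), mult r π = W (mult r σ) a b := by
  have hlcs : n ≤ lcsLen (mult r σ) (mult r π) := by
    unfold multDist at hd; omega
  have hmem : n ∈ lcsSet (mult r σ) (mult r π) :=
    lcsSet_mem_of_le (lcsLen_mem _ _) hlcs
  obtain ⟨f, g, hf, hg, hfg⟩ := hmem
  obtain ⟨a, ha⟩ : ∃ a : Fin (n + 1), ∀ p, f p ≠ a := by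
    by_contra hc
    push_neg at hc
    have hs : Function.Surjective f := fun y => hc y
    have := Fintype.card_le_of_surjective f hs
    simp at this
  obtain ⟨b, hb⟩ : ∃ b : Fin (n + 1), ∀ p, g p ≠ b := by
    by_contra hc
    push_neg at hc
    have hs : Function.Surjective g := fun y => hc y
    have := Fintype.card_le_of_surjective g hs
    simp at this
  have key : ∀ (h : Fin n → Fin (n + 1)) (c : Fin (n + 1)), StrictMono h →
      (∀ p, h p ≠ c) → h = c.succAbove := by
    intro h c hmono hne
    have W : WellFoundedLT (Fin n) := inferInstance
    refine (@StrictMono.range_inj (Fin n) (Fin (n + 1)) _ _ W _ _ hmono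
      (Fin.strictMono_succAbove c)).mp ?_
    rw [Fin.range_succAbove]
    have himg := range_eq_compl hmono.injective hne
    rw [← Set.image_univ, ← Finset.coe_univ, ← Finset.coe_image, himg,
      Finset.coe_erase, Finset.coe_univ, Set.compl_eq_univ_diff]
  have hfa : f = a.succAbove := key f a hf ha
  have hgb : g = b.succAbove := key g b hg hb
  subst hfa hgb
  refine ⟨a, b, ?_⟩
  have hoff : ∀ k : Fin (n + 1), k ≠ b → mult r π k = W (mult r σ) a b k := by
    intro k hk
    obtain ⟨p, rfl⟩ := Fin.exists_succAbove_eq hk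
    rw [show W (mult r σ) a b (b.succAbove p) = mult r σ (transloc a b (b.succAbove p)) from rfl,
      transloc_succAbove]
    exact (hfg p).symm
  have hsum : ∑ k, mult r π k = ∑ k, W (mult r σ) a b k := by
    rw [sum_mult, sum_W]
  rw [← Finset.add_sum_erase _ _ (Finset.mem_univ b),
    ← Finset.add_sum_erase _ _ (Finset.mem_univ b)] at hsum
  have hrest : ∑ k ∈ Finset.univ.erase b, mult r π k
      = ∑ k ∈ Finset.univ.erase b, W (mult r σ) a b k :=
    Finset.sum_congr rfl fun k hk => hoff k (Finset.mem_erase.mp hk).1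
  have hbb : mult r π b = W (mult r σ) a b b := by omega
  funext k
  by_cases hk : k = b
  · rw [hk]; exact hbb
  · exact hoff k hk


----------------------------------------------------------------
-- sphere characterization

lemma sphere_eq (r : ℕ) (σ : Equiv.Perm (Fin (n + 1))) :
    multSphere r σ 1 = (fun p : Fin (n + 1) × Fin (n + 1) => W (mult r σ) p.1 p.2) '' Set.univ := by
  ext x
  constructor
  · rintro ⟨π, rfl, hd⟩
    obtain ⟨a, b, hab⟩ := exists_transloc_of_multDist_le_one hd
    exact ⟨(a, b), trivial, hab.symm⟩
  · rintro ⟨⟨a, b⟩, -, rfl⟩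
    refine ⟨σ * transloc a b, rfl, ?_⟩
    exact multDist_le_one r σ _ a b rfl

----------------------------------------------------------------
-- counting

instance (m : Fin n → ℕ) (a b : Fin n) : Decidable (InC m a b) :=
  decidable_of_iff (m a ≠ m b ∧ b.val ≠ a.val - 1 ∧
    ∀ c : Fin n, c.val + 1 = a.val → m c ≠ m a) Iff.rfl

/-- canonical pairs, as a `Finset`. -/
def CF (m : Fin n → ℕ) : Finset (Fin n × Fin n) :=
  Finset.univ.filter fun p => InC m p.1 p.2

lemma CF_card (m : Fin n → ℕ) :
    (CF m).card = ∑ a : Fin n, (Finset.univ.filter fun b => InC m a b).card := by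
  rw [CF, Finset.card_eq_sum_card_fiberwise
    (f := Prod.fst) (t := Finset.univ) (fun x _ => Finset.mem_univ _)]
  refine Finset.sum_congr rfl fun a _ => ?_
  refine Finset.card_bij' (fun p _ => p.2) (fun b _ => (a, b)) ?_ ?_ ?_ ?_
  · intro p hp
    simp only [Finset.mem_filter, Finset.mem_univ, true_and] at hp ⊢
    exact hp.2 ▸ hp.1
  · intro b hb
    simp only [Finset.mem_filter, Finset.mem_univ, true_and] at hb ⊢
    exact ⟨hb, trivial⟩
  · intro p hp
    simp only [Finset.mem_filter, Finset.mem_univ, true_and] at hp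
    exact Prod.ext hp.2.symm rfl
  · intro b _; rfl

lemma nat_div_eq_iff {i c : ℕ} (hr : 0 < r) : i / r = c ↔ c * r ≤ i ∧ i < c * r + r := by
  constructor
  · intro h
    have h1 := Nat.div_add_mod i r
    have h2 := Nat.mod_lt i hr
    rw [h] at h1
    rw [Nat.mul_comm c r]
    omega
  · rintro ⟨h1, h2⟩
    exact Nat.div_eq_of_lt_le h1 (by rw [Nat.succ_mul]; omega)

lemma fin_mk_val {x : ℕ} (h : x < n) : (⟨x, h⟩ : Fin n).val = x := rfl

lemma card_val_div_eq (hr : 0 < r) {c : ℕ} (hc : c * r + r ≤ n) :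
    (Finset.univ.filter fun i : Fin n => i.val / r = c).card = r := by
  have hn : 0 < n := by omega
  have h : (Finset.univ.filter fun i : Fin n => i.val / r = c).card = (Finset.range r).card := by
    refine Finset.card_nbij' (fun i => i.val - c * r)
      (fun j => ⟨(c * r + j) % n, Nat.mod_lt _ hn⟩) ?_ ?_ ?_ ?_
    · intro i hi
      simp only [Finset.mem_coe, Finset.mem_filter, Finset.mem_univ, true_and, nat_div_eq_iff hr] at hi
      simp only [Finset.mem_coe, Finset.mem_range]
      omega
    · intro j hj
      simp only [Finset.mem_coe, Finset.mem_range] at hj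
      simp only [Finset.mem_coe, Finset.mem_filter, Finset.mem_univ, true_and, nat_div_eq_iff hr, fin_mk_val]
      rw [Nat.mod_eq_of_lt (by omega)]
      omega
    · intro i hi
      simp only [Finset.mem_coe, Finset.mem_filter, Finset.mem_univ, true_and, nat_div_eq_iff hr] at hi
      beta_reduce
      refine Fin.ext ?_
      rw [fin_mk_val, Nat.mod_eq_of_lt (by omega)]
      omega
    · intro j hj
      simp only [Finset.mem_coe, Finset.mem_range] at hj
      beta_reduce
      rw [fin_mk_val, Nat.mod_eq_of_lt (by omega)]
      omega
  rw [h, Finset.card_range]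

lemma card_mult_eq (hr : 0 < r) (hdvd : r ∣ n) (σ : Equiv.Perm (Fin n)) (a : Fin n) :
    (Finset.univ.filter fun b => mult r σ b = mult r σ a).card = r := by
  set c := (σ a).val / r with hc
  have h1 : ∀ b : Fin n, (mult r σ b = mult r σ a) ↔ ((σ b).val / r = c) := by
    intro b; unfold mult; omega
  have h2 : (Finset.univ.filter fun b => mult r σ b = mult r σ a).card
      = (Finset.univ.filter fun i : Fin n => i.val / r = c).card := by
    refine Finset.card_equiv σ fun b => ?_
    simp only [Finset.mem_filter, Finset.mem_univ, true_and, h1]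
  rw [h2]
  refine card_val_div_eq hr ?_
  obtain ⟨q, hq⟩ := hdvd
  rw [Nat.mul_comm] at hq
  have hlt : c * r < n := lt_of_le_of_lt (Nat.div_mul_le_self _ _) (σ a).isLt
  have hcq : c < q := by
    by_contra hcq
    push_neg at hcq
    have : q * r ≤ c * r := Nat.mul_le_mul_right r hcq
    omega
  calc c * r + r = (c + 1) * r := by ring
    _ ≤ q * r := Nat.mul_le_mul_right r hcq
    _ = n := by omega

/-- exact fiber count. -/
lemma fiber_card (m : Fin n → ℕ) (a : Fin n) (hrn : r < n)
    (hcard : (Finset.univ.filter fun b => m b = m a).card = r) :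
    (Finset.univ.filter fun b => InC m a b).card =
      if (∀ c : Fin n, c.val + 1 = a.val → m c ≠ m a)
      then (n - r - 1 + if a.val = 0 then 1 else 0) else 0 := by
  have hA : (Finset.univ.filter fun b => m b ≠ m a).card = n - r := by
    have := Finset.card_filter_add_card_filter_not
      (s := (Finset.univ : Finset (Fin n))) (p := fun b => m b = m a)
    simp only [ne_eq, Finset.filter_congr_decidable, Finset.card_univ,
      Fintype.card_fin] at this ⊢
    omega
  by_cases hlead : ∀ c : Fin n, c.val + 1 = a.val → m c ≠ m a
  · rw [if_pos hlead]
    have hfe : (Finset.univ.filter fun b => InC m a b)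
        = (Finset.univ.filter fun b => m b ≠ m a).filter
            (fun b => b.val ≠ a.val - 1) := by
      rw [Finset.filter_filter]
      refine Finset.filter_congr fun b _ => ?_
      unfold InC
      constructor
      · rintro ⟨h1, h2, -⟩; exact ⟨fun h => h1 h.symm, h2⟩
      · rintro ⟨h1, h2⟩; exact ⟨fun h => h1 h.symm, h2, hlead⟩
    rw [hfe]
    rcases Nat.eq_zero_or_pos a.val with ha0 | hapos
    · rw [if_pos ha0]
      have : ((Finset.univ.filter fun b => m b ≠ m a).filter
          (fun b => b.val ≠ a.val - 1)) = (Finset.univ.filter fun b => m b ≠ m a) := by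
        refine Finset.filter_true_of_mem fun b hb => ?_
        simp only [Finset.mem_filter, Finset.mem_univ, true_and] at hb
        intro hv
        exact hb (congr_m m (by omega))
      rw [this, hA]
      omega
    · rw [if_neg (by omega)]
      set b0 : Fin n := ⟨a.val - 1, by omega⟩ with hb0
      have heq : ((Finset.univ.filter fun b => m b ≠ m a).filter
          (fun b => b.val ≠ a.val - 1)) = (Finset.univ.filter fun b => m b ≠ m a).erase b0 := by
        ext b
        simp only [Finset.mem_filter, Finset.mem_erase, Finset.mem_univ, true_and, hb0]
        constructor
        · rintro ⟨h1, h2⟩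
          exact ⟨fun h => h2 (by rw [h]), h1⟩
        · rintro ⟨h1, h2⟩
          refine ⟨h2, fun h => h1 (Fin.ext (by simp [h]))⟩
      rw [heq, Finset.card_erase_of_mem, hA]
      · omega
      · simp only [Finset.mem_filter, Finset.mem_univ, true_and, hb0]
        exact hlead b0 (by simp [hb0]; omega)
  · rw [if_neg hlead]
    rw [Finset.card_eq_zero, Finset.filter_eq_empty_iff]
    intro b _
    unfold InC
    rintro ⟨-, -, h3⟩
    exact hlead h3


----------------------------------------------------------------
-- injectivity for adjacent-distinct words

lemma W_at_b (m : Fin n → ℕ) {a b : Fin n} (hab : a ≠ b) :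
    W m a b b = m a := by
  have hv : a.val ≠ b.val := fun h => hab (Fin.ext h)
  rw [W_apply]
  exact congr_m m (show tf a.val b.val b.val = a.val by unfold tf; split_ifs <;> omega)

lemma W_ne_self (m : Fin n → ℕ) {a b : Fin n} (hab : m a ≠ m b) :
    W m a b ≠ m := by
  intro h
  have : W m a b b = m b := by rw [h]
  rw [W_at_b m (fun he => hab (congrArg m he))] at this
  exact hab this

lemma W_diff (m : Fin n → ℕ) (hadj : ∀ k l : Fin n, k.val + 1 = l.val → m k ≠ m l)
    {a b : Fin n} (hab : m a ≠ m b) (k : Fin n) :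
    W m a b k ≠ m k ↔ (min a.val b.val ≤ k.val ∧ k.val ≤ max a.val b.val) := by
  have hane : a.val ≠ b.val := fun h => hab (congr_m m h)
  by_cases h1 : k.val < min a.val b.val ∨ max a.val b.val < k.val
  · have ht : tf a.val b.val k.val = k.val := by unfold tf; split_ifs <;> omega
    rw [W_apply, congr_m m ht]
    simp only [ne_eq, not_true_eq_false, false_iff]
    omega
  · push_neg at h1
    refine iff_of_true ?_ (by omega)
    by_cases hkb : k.val = b.val
    · have ht : tf a.val b.val k.val = a.val := by unfold tf; split_ifs <;> omega
      rw [W_apply, congr_m m ht]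
      exact fun hh => hab (hh.trans (congr_m m hkb))
    · rcases Nat.lt_or_ge a.val b.val with h | h
      · -- ascending : index k+1
        have hk1 : k.val + 1 < n := by omega
        have ht : tf a.val b.val k.val = k.val + 1 := by unfold tf; split_ifs <;> omega
        rw [W_apply, congr_m m (x := ⟨tf a.val b.val k.val, _⟩) (y := ⟨k.val + 1, hk1⟩) ht]
        exact (hadj k ⟨k.val + 1, hk1⟩ rfl).symm
      · -- descending : index k-1
        have hk0 : 0 < k.val := by omega
        have ht : tf a.val b.val k.val = k.val - 1 := by unfold tf; split_ifs <;> omega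
        rw [W_apply, congr_m m (x := ⟨tf a.val b.val k.val, _⟩)
          (y := ⟨k.val - 1, by omega⟩) ht]
        exact hadj ⟨k.val - 1, by omega⟩ k (by rw [fin_mk_val]; omega)

lemma inj_on_CF (m : Fin n → ℕ) (hadj : ∀ k l : Fin n, k.val + 1 = l.val → m k ≠ m l)
    (h2 : ∀ k l : Fin n, k.val + 2 = l.val → m k ≠ m l)
    {a b a' b' : Fin n} (hC : InC m a b) (hC' : InC m a' b')
    (heq : W m a b = W m a' b') : a = a' ∧ b = b' := by
  obtain ⟨hab, hbno, -⟩ := hC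
  obtain ⟨hab', hbno', -⟩ := hC'
  have hane : a.val ≠ b.val := fun h => hab (congr_m m h)
  have hane' : a'.val ≠ b'.val := fun h => hab' (congr_m m h)
  have hiff : ∀ k : Fin n,
      (min a.val b.val ≤ k.val ∧ k.val ≤ max a.val b.val) ↔
      (min a'.val b'.val ≤ k.val ∧ k.val ≤ max a'.val b'.val) := by
    intro k
    rw [← W_diff m hadj hab k, ← W_diff m hadj hab' k, heq]
  have hun : max a.val b.val < n := by
    rcases Nat.lt_or_ge a.val b.val with h | h
    · simpa [Nat.max_eq_right (le_of_lt h)] using b.isLt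
    · simpa [Nat.max_eq_left h] using a.isLt
  have hun' : max a'.val b'.val < n := by
    rcases Nat.lt_or_ge a'.val b'.val with h | h
    · simpa [Nat.max_eq_right (le_of_lt h)] using b'.isLt
    · simpa [Nat.max_eq_left h] using a'.isLt
  have g1 := hiff ⟨min a.val b.val, by omega⟩
  have g2 := hiff ⟨max a.val b.val, by omega⟩
  have g3 := hiff ⟨min a'.val b'.val, by omega⟩
  have g4 := hiff ⟨max a'.val b'.val, by omega⟩
  simp only [fin_mk_val] at g1 g2 g3 g4
  have hminmax : min a.val b.val = min a'.val b'.val ∧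
      max a.val b.val = max a'.val b'.val := by omega
  obtain ⟨hmin, hmax⟩ := hminmax
  -- now resolve orientation
  rcases Nat.lt_or_ge a.val b.val with h | h
  · rcases Nat.lt_or_ge a'.val b'.val with h' | h'
    · constructor <;> apply Fin.ext <;> omega
    · -- a < b and b' < a' : contradiction
      have hl : a.val = b'.val := by omega
      have hu : b.val = a'.val := by omega
      by_cases hadj1 : b.val = a.val + 1
      · -- then b' = a' - 1 violating InC of (a',b')
        exact absurd (by omega) hbno'
      · -- middle point
        set l := a.val with hldef
        have hk : l + 1 < n := by omega
        have e1 : tf a.val b.val (l + 1) = l + 2 := by unfold tf; split_ifs <;> omega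
        have e2 : tf a'.val b'.val (l + 1) = l := by unfold tf; split_ifs <;> omega
        have hc := congrFun heq ⟨l + 1, hk⟩
        rw [W_apply, W_apply] at hc
        rw [congr_m m (x := ⟨tf a.val b.val (l+1), _⟩) (y := ⟨l + 2, by omega⟩) e1,
          congr_m m (x := ⟨tf a'.val b'.val (l+1), _⟩) (y := ⟨l, by omega⟩) e2] at hc
        exact absurd hc.symm (h2 ⟨l, by omega⟩ ⟨l + 2, by omega⟩ (by simp only [fin_mk_val]))
  · rcases Nat.lt_or_ge a'.val b'.val with h' | h'
    · -- b < a and a' < b' : contradiction (symmetric)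
      have hl : b.val = a'.val := by omega
      have hu : a.val = b'.val := by omega
      by_cases hadj1 : a.val = b.val + 1
      · exact absurd (by omega) hbno
      · set l := b.val with hldef
        have hk : l + 1 < n := by omega
        have e1 : tf a.val b.val (l + 1) = l := by unfold tf; split_ifs <;> omega
        have e2 : tf a'.val b'.val (l + 1) = l + 2 := by unfold tf; split_ifs <;> omega
        have hc := congrFun heq ⟨l + 1, hk⟩
        rw [W_apply, W_apply] at hc
        rw [congr_m m (x := ⟨tf a.val b.val (l+1), _⟩) (y := ⟨l, by omega⟩) e1,
          congr_m m (x := ⟨tf a'.val b'.val (l+1), _⟩) (y := ⟨l + 2, by omega⟩) e2] at hc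
        exact absurd hc (h2 ⟨l, by omega⟩ ⟨l + 2, by omega⟩ (by simp only [fin_mk_val]))
    · constructor <;> apply Fin.ext <;> omega


----------------------------------------------------------------
-- assembly

lemma sum_fiber_bound (n r : ℕ) (hn : 0 < n) :
    ∑ a : Fin n, ((n - r - 1) + if a.val = 0 then 1 else 0) = n * (n - r - 1) + 1 := by
  rw [Finset.sum_add_distrib, Finset.sum_const, Finset.card_univ, Fintype.card_fin,
    smul_eq_mul]
  congr 1
  have : ∀ a : Fin n, (if a.val = 0 then 1 else 0) = if a = (⟨0, hn⟩ : Fin n) then 1 else 0 := by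
    intro a
    congr 1
    simp [Fin.ext_iff]
  rw [Finset.sum_congr rfl fun a _ => this a, Finset.sum_ite_eq' Finset.univ]
  simp

lemma arith_eq {n r : ℕ} (hr : 1 ≤ r) (h3 : 3 * r ≤ n) :
    1 + (n - 1) ^ 2 - (r - 1) * n = n * (n - r - 1) + 2 := by
  rw [pow_two]
  have q1 : (n - 1) * (n - 1) + 2 * n = n * n + 1 := by
    cases n with
    | zero => omega
    | succ k => simp only [Nat.succ_sub_one]; ring
  have q2 : n * (n - r - 1) + n * (r + 1) = n * n := by
    rw [← Nat.mul_add, show n - r - 1 + (r + 1) = n from by omega]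
  have q3 : (r - 1) * n + 2 * n = (r + 1) * n := by
    rw [show (r:ℕ) + 1 = (r - 1) + 2 from by omega, Nat.add_mul]
  have q4 : n * (r + 1) = (r + 1) * n := Nat.mul_comm _ _
  omega

theorem multSphere_omega_max' {n r : ℕ} (hr : 0 < r) (hdvd : r ∣ n) (hnr : 2 < n / r)
    (ω : Equiv.Perm (Fin n)) (hω : ∀ i : Fin n, mult r ω i = i.val % (n / r) + 1) :
    (multSphere r ω 1).ncard = 1 + (n - 1) ^ 2 - (r - 1) * n ∧
    ∀ σ : Equiv.Perm (Fin n), (multSphere r σ 1).ncard ≤ (multSphere r ω 1).ncard := by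
  set q := n / r with hqdef
  have hq3 : 3 ≤ q := hnr
  have hqr : q * r = n := Nat.div_mul_cancel hdvd
  have h3r : 3 * r ≤ n := by
    calc 3 * r ≤ q * r := Nat.mul_le_mul_right r hq3
    _ = n := hqr
  have hrn : r < n := by omega
  have hn : 0 < n := by omega
  -- mod-q separation lemmas
  have hadj : ∀ k l : Fin n, k.val + 1 = l.val → mult r ω k ≠ mult r ω l := by
    intro k l hkl h
    rw [hω k, hω l] at h
    have hmod : k.val % q = l.val % q := by omega
    have hdl : q ∣ l.val - k.val := (Nat.modEq_iff_dvd' (by omega)).mp hmod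
    rw [show l.val - k.val = 1 from by omega] at hdl
    have := Nat.le_of_dvd one_pos hdl
    omega
  have h2 : ∀ k l : Fin n, k.val + 2 = l.val → mult r ω k ≠ mult r ω l := by
    intro k l hkl h
    rw [hω k, hω l] at h
    have hmod : k.val % q = l.val % q := by omega
    have hdl : q ∣ l.val - k.val := (Nat.modEq_iff_dvd' (by omega)).mp hmod
    rw [show l.val - k.val = 2 from by omega] at hdl
    have := Nat.le_of_dvd (by omega) hdl
    omega
  obtain ⟨n', rfl⟩ : ∃ n', n = n' + 1 := ⟨n - 1, by omega⟩
  -- sphere as image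
  have hsph : ∀ σ : Equiv.Perm (Fin (n' + 1)), multSphere r σ 1 =
      (fun p : Fin (n' + 1) × Fin (n' + 1) => W (mult r σ) p.1 p.2) '' Set.univ :=
    fun σ => sphere_eq r σ
  -- generic upper bound pieces
  have hsub : ∀ σ : Equiv.Perm (Fin (n' + 1)),
      (fun p : Fin (n' + 1) × Fin (n' + 1) => W (mult r σ) p.1 p.2) '' Set.univ ⊆
        insert (mult r σ)
          ((fun p : Fin (n' + 1) × Fin (n' + 1) => W (mult r σ) p.1 p.2) '' ↑(CF (mult r σ))) := by
    rintro σ x ⟨p, -, rfl⟩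
    rcases reduce (mult r σ) p.1 p.2 with h | ⟨a', b', hC, he⟩
    · show W (mult r σ) p.1 p.2 ∈ _
      rw [h]; exact Set.mem_insert _ _
    · refine Set.mem_insert_of_mem _ ⟨(a', b'), ?_, he.symm⟩
      exact Finset.mem_coe.mpr (Finset.mem_filter.mpr ⟨Finset.mem_univ _, hC⟩)
  have hCFcard : ∀ σ : Equiv.Perm (Fin (n' + 1)),
      (CF (mult r σ)).card ≤ (n' + 1) * (n' + 1 - r - 1) + 1 := by
    intro σ
    rw [CF_card]
    calc ∑ a : Fin (n' + 1), (Finset.univ.filter fun b => InC (mult r σ) a b).card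
        ≤ ∑ a : Fin (n' + 1), ((n' + 1 - r - 1) + if a.val = 0 then 1 else 0) := by
          refine Finset.sum_le_sum fun a _ => ?_
          rw [fiber_card (mult r σ) a hrn (card_mult_eq hr hdvd σ a)]
          split_ifs <;> omega
      _ = (n' + 1) * (n' + 1 - r - 1) + 1 := sum_fiber_bound _ _ hn
  -- exact count for ω
  have hCFω : (CF (mult r ω)).card = (n' + 1) * (n' + 1 - r - 1) + 1 := by
    rw [CF_card]
    have : ∀ a : Fin (n' + 1), (Finset.univ.filter fun b => InC (mult r ω) a b).card
        = ((n' + 1 - r - 1) + if a.val = 0 then 1 else 0) := by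
      intro a
      rw [fiber_card (mult r ω) a hrn (card_mult_eq hr hdvd ω a)]
      rw [if_pos (fun c hc => hadj c a hc)]
    rw [Finset.sum_congr rfl fun a _ => this a, sum_fiber_bound _ _ hn]
  have hωeq : (multSphere r ω 1).ncard = (n' + 1) * (n' + 1 - r - 1) + 2 := by
    rw [hsph ω]
    have himg : (fun p : Fin (n' + 1) × Fin (n' + 1) => W (mult r ω) p.1 p.2) '' Set.univ =
        insert (mult r ω)
          ((fun p : Fin (n' + 1) × Fin (n' + 1) => W (mult r ω) p.1 p.2) '' ↑(CF (mult r ω))) := by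
      refine Set.Subset.antisymm (hsub ω) ?_
      rintro x (rfl | ⟨p, -, rfl⟩)
      · exact ⟨(⟨0, hn⟩, ⟨0, hn⟩), trivial, W_self (mult r ω) ⟨0, hn⟩⟩
      · exact ⟨p, trivial, rfl⟩
    rw [himg]
    have hfin : ((fun p : Fin (n' + 1) × Fin (n' + 1) => W (mult r ω) p.1 p.2)
        '' ↑(CF (mult r ω))).Finite := Set.Finite.image _ (CF (mult r ω)).finite_toSet
    have hnotmem : mult r ω ∉ (fun p : Fin (n' + 1) × Fin (n' + 1) => W (mult r ω) p.1 p.2)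
        '' ↑(CF (mult r ω)) := by
      rintro ⟨p, hp, he⟩
      have hC : InC (mult r ω) p.1 p.2 :=
        (Finset.mem_filter.mp (Finset.mem_coe.mp hp)).2
      exact W_ne_self (mult r ω) hC.1 he
    rw [Set.ncard_insert_of_notMem hnotmem hfin]
    have hinj : Set.InjOn (fun p : Fin (n' + 1) × Fin (n' + 1) => W (mult r ω) p.1 p.2)
        ↑(CF (mult r ω)) := by
      intro p hp p' hp' he
      have hC : InC (mult r ω) p.1 p.2 := (Finset.mem_filter.mp (Finset.mem_coe.mp hp)).2
      have hC' : InC (mult r ω) p'.1 p'.2 := (Finset.mem_filter.mp (Finset.mem_coe.mp hp')).2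
      obtain ⟨e1, e2⟩ := inj_on_CF (mult r ω) hadj h2 hC hC' he
      exact Prod.ext e1 e2
    rw [Set.ncard_image_of_injOn hinj, Set.ncard_coe_finset, hCFω]
  constructor
  · rw [hωeq, arith_eq hr h3r]
  · intro σ
    rw [hωeq, hsph σ]
    calc ((fun p : Fin (n' + 1) × Fin (n' + 1) => W (mult r σ) p.1 p.2) '' Set.univ).ncard
        ≤ (insert (mult r σ)
            ((fun p : Fin (n' + 1) × Fin (n' + 1) => W (mult r σ) p.1 p.2)
              '' ↑(CF (mult r σ)))).ncard := by
          refine Set.ncard_le_ncard (hsub σ) ?_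
          exact Set.Finite.insert _ (Set.Finite.image _ (CF (mult r σ)).finite_toSet)
      _ ≤ ((fun p : Fin (n' + 1) × Fin (n' + 1) => W (mult r σ) p.1 p.2)
            '' ↑(CF (mult r σ))).ncard + 1 := Set.ncard_insert_le _ _
      _ ≤ (↑(CF (mult r σ)) : Set (Fin (n' + 1) × Fin (n' + 1))).ncard + 1 := by
          have := Set.ncard_image_le (s := (↑(CF (mult r σ)) : Set (Fin (n' + 1) × Fin (n' + 1))))
            (f := fun p : Fin (n' + 1) × Fin (n' + 1) => W (mult r σ) p.1 p.2)
            (CF (mult r σ)).finite_toSet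
          omega
      _ ≤ (n' + 1) * (n' + 1 - r - 1) + 2 := by
          rw [Set.ncard_coe_finset]
          have := hCFcard σ
          omega


/-- For `n/r > 2` and `ω` with `m_ω^r(i) ≡ i (mod n/r)`, the sphere
`S(m_ω^r, 1)` has size `1 + (n−1)² − (r−1)n` and is maximal among all centers. -/
theorem multSphere_omega_max {n r : ℕ} (hr : 0 < r) (hdvd : r ∣ n) (hnr : 2 < n / r)
    (ω : Equiv.Perm (Fin n)) (hω : ∀ i : Fin n, mult r ω i = i.val % (n / r) + 1) :
    (multSphere r ω 1).ncard = 1 + (n - 1) ^ 2 - (r - 1) * n ∧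
    ∀ σ : Equiv.Perm (Fin n), (multSphere r σ 1).ncard ≤ (multSphere r ω 1).ncard := by
  exact multSphere_omega_max' hr hdvd hnr ω hω

end UlamPaper
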